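/- arXiv:quant-ph/0408140 — 2 statements merged into one kernel-verified Lean document; each statement's English description precedes it below -/
import Mathlib

section
/- The density of the limit law of the Hadamard quantum walk integrates to one: ∫_{-1/√2}^{1/√2} 1 / (π (1 - x²) √(1 - 2x²)) dx = 1. -/
open Real MeasureTheory intervalIntegral Set

noncomputable def hadG (x : ℝ) : ℝ := (1 / π) * Real.arcsin (x / Real.sqrt (1 - x ^ 2))

lemma hadG_contOn : ContinuousOn hadG (Set.Icc (-(1 / Real.sqrt 2)) (1 / Real.sqrt 2)) := by
  apply ContinuousOn.mul continuousOn_const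
  apply Real.continuous_arcsin.comp_continuousOn
  apply ContinuousOn.div continuousOn_id
  · exact (Real.continuous_sqrt.comp (by continuity)).continuousOn
  · intro x hx
    have h2 : Real.sqrt 2 = Real.sqrt 2 := rfl
    have hs2 : (0:ℝ) < Real.sqrt 2 := Real.sqrt_pos.2 (by norm_num)
    have hx2 : x ^ 2 ≤ 1 / 2 := by
      rcases hx with ⟨h1, h2'⟩
      have := sq_le_sq' h1 h2'
      rw [div_pow, one_pow, Real.sq_sqrt (by norm_num : (0:ℝ) ≤ 2)] at this
      linarith
    have : (0:ℝ) < 1 - x ^ 2 := by nlinarith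
    exact ne_of_gt (Real.sqrt_pos.2 this)

lemma hadG_deriv {x : ℝ} (hx : x ^ 2 < 1 / 2) :
    HasDerivAt hadG (1 / (π * (1 - x ^ 2) * Real.sqrt (1 - 2 * x ^ 2))) x := by
  have h1 : (0:ℝ) < 1 - x ^ 2 := by nlinarith
  have h2 : (0:ℝ) < 1 - 2 * x ^ 2 := by nlinarith
  have hs : 0 < Real.sqrt (1 - x ^ 2) := Real.sqrt_pos.2 h1
  have hs2 : 0 < Real.sqrt (1 - 2 * x ^ 2) := Real.sqrt_pos.2 h2
  have hsq : Real.sqrt (1 - x ^ 2) ^ 2 = 1 - x ^ 2 := Real.sq_sqrt h1.le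
  -- derivative of inner function u = x / sqrt (1 - x^2)
  have hin : HasDerivAt (fun x : ℝ => 1 - x ^ 2) (-(2 * x)) x := by
    simpa using ((hasDerivAt_pow 2 x).const_sub 1)
  have hv : HasDerivAt (fun x : ℝ => Real.sqrt (1 - x ^ 2))
      (-(2 * x) / (2 * Real.sqrt (1 - x ^ 2))) x := hin.sqrt h1.ne'
  have hu : HasDerivAt (fun x : ℝ => x / Real.sqrt (1 - x ^ 2))
      ((1 * Real.sqrt (1 - x ^ 2) - x * (-(2 * x) / (2 * Real.sqrt (1 - x ^ 2)))) /
        Real.sqrt (1 - x ^ 2) ^ 2) x := (hasDerivAt_id x).div hv hs.ne'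
  set u := x / Real.sqrt (1 - x ^ 2) with hu_def
  have hu2 : u ^ 2 < 1 := by
    rw [hu_def, div_pow, hsq, div_lt_one h1]
    nlinarith
  have hune : u ≠ -1 ∧ u ≠ 1 := by
    constructor <;> intro h <;> rw [h] at hu2 <;> norm_num at hu2
  have harc : HasDerivAt Real.arcsin (1 / Real.sqrt (1 - u ^ 2)) u :=
    Real.hasDerivAt_arcsin hune.1 hune.2
  have hcomp := (harc.comp x hu).const_mul (1 / π)
  convert hcomp using 1
  case e'_4 => rfl
  case e'_5 => rfl
  case e'_8 => rfl
  have h1u : 1 - u ^ 2 = (1 - 2 * x ^ 2) / (1 - x ^ 2) := by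
    rw [hu_def, div_pow, hsq]
    field_simp
    ring
  rw [h1u, Real.sqrt_div h2.le]
  rw [hsq]
  rw [div_div_eq_mul_div, one_mul]
  field_simp
  have h3 : Real.sqrt (1 - x ^ 2) ^ 3 = (1 - x ^ 2) * Real.sqrt (1 - x ^ 2) := by
    rw [pow_succ, hsq]
  ring_nf
  rw [hsq]
  ring

theorem hadamard_density_integrates_to_one :
    ∫ x in (-(1 / Real.sqrt 2) : ℝ)..(1 / Real.sqrt 2),
      1 / (π * (1 - x ^ 2) * Real.sqrt (1 - 2 * x ^ 2)) = 1 := by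
  have hs2 : (0:ℝ) < Real.sqrt 2 := Real.sqrt_pos.2 (by norm_num)
  set c : ℝ := 1 / Real.sqrt 2 with hc
  have hcpos : 0 < c := by positivity
  have hab : -c < c := by linarith
  have hc2 : c ^ 2 = 1 / 2 := by
    rw [hc, div_pow, one_pow, Real.sq_sqrt (by norm_num : (0:ℝ) ≤ 2)]
  have hIoo : ∀ x ∈ Set.Ioo (-c) c, x ^ 2 < 1 / 2 := by
    intro x hx
    have := sq_lt_sq' hx.1 hx.2
    rw [hc2] at this
    exact this
  have hnonneg : ∀ x ∈ Set.Ioo (-c) c,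
      0 ≤ 1 / (π * (1 - x ^ 2) * Real.sqrt (1 - 2 * x ^ 2)) := by
    intro x hx
    have hx2 := hIoo x hx
    have h1 : (0:ℝ) < 1 - x ^ 2 := by nlinarith
    have h2 : (0:ℝ) < 1 - 2 * x ^ 2 := by nlinarith
    have : 0 < π * (1 - x ^ 2) * Real.sqrt (1 - 2 * x ^ 2) :=
      mul_pos (mul_pos Real.pi_pos h1) (Real.sqrt_pos.2 h2)
    positivity
  have hint : IntervalIntegrable
      (fun x => 1 / (π * (1 - x ^ 2) * Real.sqrt (1 - 2 * x ^ 2))) volume (-c) c := by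
    apply intervalIntegrable_deriv_of_nonneg (g := hadG)
    · rw [Set.uIcc_of_le hab.le]; exact hadG_contOn
    · rw [min_eq_left hab.le, max_eq_right hab.le]
      exact fun x hx => hadG_deriv (hIoo x hx)
    · rw [min_eq_left hab.le, max_eq_right hab.le]
      exact hnonneg
  rw [integral_eq_sub_of_hasDerivAt_of_le hab.le hadG_contOn
    (fun x hx => hadG_deriv (hIoo x hx)) hint]
  have e1 : (1:ℝ) - c ^ 2 = 1 / 2 := by rw [hc2]; norm_num
  have e2 : Real.sqrt (1 / 2) = c := by
    rw [hc, one_div, one_div, Real.sqrt_inv]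
  have hGc : hadG c = 1 / π * (π / 2) := by
    rw [hadG, e1, e2, div_self hcpos.ne', Real.arcsin_one]
  have hGnc : hadG (-c) = 1 / π * (-(π / 2)) := by
    rw [hadG, show ((-c:ℝ)) ^ 2 = c ^ 2 from by ring, e1, e2, neg_div,
      div_self hcpos.ne', Real.arcsin_neg_one]
  rw [hGc, hGnc]
  field_simp
  norm_num
end

section
/- The second moment of the Hadamard walk limit density equals (2-√2)/2: ∫_{-1/√2}^{1/√2} x² / (π (1 - x²) √(1 - 2x²)) dx = (2 - √2)/2. -/
open Real Set Filter MeasureTheory intervalIntegral Topology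

noncomputable def Hanti (x : ℝ) : ℝ :=
  (1/π) * Real.arctan (x / Real.sqrt (1 - 2*x^2))
    - (1/(π * Real.sqrt 2)) * Real.arcsin (Real.sqrt 2 * x)

lemma hderiv_aux {x : ℝ} (hx : x ∈ Ioo (-(1/Real.sqrt 2)) (1/Real.sqrt 2)) :
    HasDerivAt Hanti (x ^ 2 / (π * (1 - x ^ 2) * Real.sqrt (1 - 2 * x ^ 2))) x := by
  have h2 : (0:ℝ) < Real.sqrt 2 := by positivity
  have h22 : Real.sqrt 2 ^ 2 = 2 := Real.sq_sqrt (by norm_num)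
  have hx2 : x^2 < 1/2 := by
    have h1 := hx.1; have h2' := hx.2
    have hb : (1/Real.sqrt 2)^2 = 1/2 := by
      rw [div_pow, h22]; norm_num
    nlinarith [mul_pos (sub_pos.2 h2') (by linarith : 0 < 1/Real.sqrt 2 + x)]
  have hs : (0:ℝ) < 1 - 2*x^2 := by linarith
  set s := Real.sqrt (1 - 2*x^2) with hs_def
  have hs0 : 0 < s := Real.sqrt_pos.mpr hs
  have hss : s^2 = 1 - 2*x^2 := Real.sq_sqrt hs.le
  have h1x : (0:ℝ) < 1 - x^2 := by nlinarith
  have hπ : (0:ℝ) < π := Real.pi_pos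
  have d1 : HasDerivAt (fun y : ℝ => 1 - 2*y^2) (-(4*x)) x := by
    have h := ((hasDerivAt_pow 2 x).const_mul (2:ℝ)).const_sub 1
    norm_num at h
    have e : -(4*x) = -(2*(2*x)) := by ring
    rw [e]; exact h
  have ds : HasDerivAt (fun y : ℝ => Real.sqrt (1 - 2*y^2)) (-(4*x) / (2*s)) x :=
    d1.sqrt (ne_of_gt hs)
  have dq : HasDerivAt (fun y : ℝ => y / Real.sqrt (1 - 2*y^2))
      ((1 * s - x * (-(4*x) / (2*s))) / s^2) x :=
    (hasDerivAt_id x).div ds (ne_of_gt hs0)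
  have datan : HasDerivAt (fun y : ℝ => Real.arctan (y / Real.sqrt (1 - 2*y^2)))
      (1 / (1 + (x/s) ^ 2) * ((1 * s - x * (-(4*x) / (2*s))) / s^2)) x := dq.arctan
  have habs : (Real.sqrt 2 * x)^2 < 1 := by rw [mul_pow, h22]; linarith
  have hne1 : Real.sqrt 2 * x ≠ -1 := by intro h; rw [h] at habs; norm_num at habs
  have hne2 : Real.sqrt 2 * x ≠ 1 := by intro h; rw [h] at habs; norm_num at habs
  have dlin : HasDerivAt (fun y : ℝ => Real.sqrt 2 * y) (Real.sqrt 2) x := by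
    simpa using (hasDerivAt_id x).const_mul (Real.sqrt 2)
  have dasin : HasDerivAt (fun y : ℝ => Real.arcsin (Real.sqrt 2 * y))
      (1 / Real.sqrt (1 - (Real.sqrt 2 * x) ^ 2) * Real.sqrt 2) x := by
    have h := HasDerivAt.comp x (Real.hasDerivAt_arcsin hne1 hne2) dlin
    exact h
  have hsimp : Real.sqrt (1 - (Real.sqrt 2 * x) ^ 2) = s := by
    have hsq : (Real.sqrt 2 * x)^2 = 2*x^2 := by rw [mul_pow, h22]
    rw [hsq, hs_def]
  rw [hsimp] at dasin
  have dH := (datan.const_mul (1/π)).sub (dasin.const_mul (1/(π * Real.sqrt 2)))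
  have hsne : s ≠ 0 := ne_of_gt hs0
  have e1 : 1 + (x/s)^2 = (1-x^2)/s^2 := by
    field_simp; linarith [hss]
  have e2 : 1 * s - x * (-(4*x) / (2*s)) = 1/s := by
    field_simp
    linear_combination 2*hss
  rw [e1, e2] at dH
  convert dH using 1
  · rfl
  · rfl
  · rfl
  field_simp
  ring

lemma hmeas : Measurable (fun x : ℝ => x ^ 2 / (π * (1 - x ^ 2) * Real.sqrt (1 - 2 * x ^ 2))) := by
  fun_prop

lemma hint_pos : IntervalIntegrable
    (fun x : ℝ => x ^ 2 / (π * (1 - x ^ 2) * Real.sqrt (1 - 2 * x ^ 2)))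
    volume 0 (1/Real.sqrt 2) := by
  set b : ℝ := 1/Real.sqrt 2 with hb_def
  have h2 : (0:ℝ) < Real.sqrt 2 := by positivity
  have h22 : Real.sqrt 2 ^ 2 = 2 := Real.sq_sqrt (by norm_num)
  have hb : (0:ℝ) < b := by positivity
  have hb2 : b^2 = 1/2 := by rw [hb_def, div_pow, h22]; norm_num
  have hsb2 : Real.sqrt 2 = 2*b := by
    rw [hb_def]; field_simp; exact h22
  have hq : (0:ℝ) < Real.sqrt (Real.sqrt 2) := by positivity
  have base : IntervalIntegrable (fun x : ℝ => x ^ (-(1/2) : ℝ)) volume 0 b :=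
    intervalIntegral.intervalIntegrable_rpow' (by norm_num)
  have refl : IntervalIntegrable (fun x : ℝ => (b - x) ^ (-(1/2) : ℝ)) volume 0 b := by
    simpa using (base.comp_sub_left b).symm
  have dom : IntervalIntegrable (fun x : ℝ => (1/(π * Real.sqrt (Real.sqrt 2))) * (b - x) ^ (-(1/2) : ℝ)) volume 0 b :=
    refl.const_mul _
  apply dom.mono_fun' (hmeas.aestronglyMeasurable)
  rw [Filter.EventuallyLE, ae_restrict_iff' measurableSet_uIoc]
  filter_upwards with x hx
  rw [Set.uIoc_of_le hb.le] at hx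
  obtain ⟨hx0, hxb⟩ := hx
  have hx1 : x^2 ≤ 1/2 := by nlinarith
  have h1x : (0:ℝ) < 1 - x^2 := by nlinarith
  have hπ := Real.pi_pos
  have hgnn : 0 ≤ x ^ 2 / (π * (1 - x ^ 2) * Real.sqrt (1 - 2 * x ^ 2)) := by positivity
  rw [Real.norm_eq_abs, abs_of_nonneg hgnn]
  rcases eq_or_lt_of_le hxb with h | h
  · have e0 : 1 - 2*x^2 = 0 := by nlinarith [h ▸ hb2]
    have e1 : b - x = 0 := by rw [← h]; ring
    rw [e0, Real.sqrt_zero, mul_zero, div_zero, e1, Real.zero_rpow (by norm_num)]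
    simp
  · have hbx : (0:ℝ) < b - x := by linarith
    have hkey : Real.sqrt (Real.sqrt 2) * Real.sqrt (b - x) ≤ Real.sqrt (1 - 2*x^2) := by
      rw [← Real.sqrt_mul h2.le]
      apply Real.sqrt_le_sqrt
      rw [hsb2]
      nlinarith [mul_nonneg hx0.le hbx.le]
    have hrp : (b - x) ^ (-(1/2) : ℝ) = (Real.sqrt (b - x))⁻¹ := by
      rw [Real.rpow_neg hbx.le, ← Real.sqrt_eq_rpow]
    rw [hrp]
    have hsbx : (0:ℝ) < Real.sqrt (b - x) := Real.sqrt_pos.mpr hbx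
    have hrhs : (1/(π * Real.sqrt (Real.sqrt 2))) * (Real.sqrt (b - x))⁻¹
        = 1 / (π * Real.sqrt (Real.sqrt 2) * Real.sqrt (b - x)) := by
      field_simp
    have hs12 : (0:ℝ) < Real.sqrt (1 - 2*x^2) := Real.sqrt_pos.mpr (by nlinarith)
    rw [hrhs, div_le_div_iff₀ (mul_pos (mul_pos hπ h1x) hs12) (by positivity)]
    nlinarith [mul_le_mul (by linarith : x^2 ≤ 1-x^2) hkey (by positivity) (by linarith), hπ,
      mul_pos hq hsbx]

lemma sqrt_tendsto_top : Tendsto (fun x : ℝ => Real.sqrt (1 - 2*x^2))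
    (𝓝[<] (1/Real.sqrt 2)) (𝓝[>] 0) := by
  have h2 : (0:ℝ) < Real.sqrt 2 := by positivity
  have h22 : Real.sqrt 2 ^ 2 = 2 := Real.sq_sqrt (by norm_num)
  have hb : (0:ℝ) < 1/Real.sqrt 2 := by positivity
  have hb2 : (1/Real.sqrt 2:ℝ)^2 = 1/2 := by rw [div_pow, h22]; norm_num
  rw [tendsto_nhdsWithin_iff]
  constructor
  · have hc : Continuous (fun x : ℝ => Real.sqrt (1 - 2*x^2)) := by fun_prop
    have := (hc.tendsto (1/Real.sqrt 2)).mono_left (nhdsWithin_le_nhds (s := Iio (1/Real.sqrt 2)))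
    convert this using 2
    rw [hb2]; norm_num
  · filter_upwards [Ioo_mem_nhdsLT_of_mem (Set.right_mem_Ioc.mpr hb)] with x hx
    have : 0 < 1 - 2*x^2 := by nlinarith [hx.1, hx.2]
    exact Real.sqrt_pos.mpr this

lemma tendsto_b : Tendsto Hanti (𝓝[<] (1/Real.sqrt 2))
    (𝓝 ((1/π) * (π/2) - (1/(π * Real.sqrt 2)) * (π/2))) := by
  have h2 : (0:ℝ) < Real.sqrt 2 := by positivity
  have hb : (0:ℝ) < 1/Real.sqrt 2 := by positivity
  have inner : Tendsto (fun x : ℝ => x / Real.sqrt (1 - 2*x^2))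
      (𝓝[<] (1/Real.sqrt 2)) atTop := by
    simp only [div_eq_mul_inv]
    exact Filter.Tendsto.pos_mul_atTop hb
      (tendsto_id.mono_left nhdsWithin_le_nhds)
      sqrt_tendsto_top.inv_tendsto_nhdsGT_zero
  have t1 : Tendsto (fun x : ℝ => Real.arctan (x / Real.sqrt (1 - 2*x^2)))
      (𝓝[<] (1/Real.sqrt 2)) (𝓝 (π/2)) :=
    (Real.tendsto_arctan_atTop.mono_right nhdsWithin_le_nhds).comp inner
  have t2 : Tendsto (fun x : ℝ => Real.arcsin (Real.sqrt 2 * x))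
      (𝓝[<] (1/Real.sqrt 2)) (𝓝 (π/2)) := by
    have hc : Continuous (fun x : ℝ => Real.arcsin (Real.sqrt 2 * x)) :=
      Real.continuous_arcsin.comp (continuous_const.mul continuous_id)
    have := (hc.tendsto (1/Real.sqrt 2)).mono_left (nhdsWithin_le_nhds (s := Iio (1/Real.sqrt 2)))
    convert this using 2
    rw [mul_one_div, div_self (ne_of_gt h2), Real.arcsin_one]
  exact (t1.const_mul (1/π)).sub (t2.const_mul (1/(π * Real.sqrt 2)))

lemma sqrt_tendsto_bot : Tendsto (fun x : ℝ => Real.sqrt (1 - 2*x^2))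
    (𝓝[>] (-(1/Real.sqrt 2))) (𝓝[>] 0) := by
  have h2 : (0:ℝ) < Real.sqrt 2 := by positivity
  have h22 : Real.sqrt 2 ^ 2 = 2 := Real.sq_sqrt (by norm_num)
  have hb : (0:ℝ) < 1/Real.sqrt 2 := by positivity
  have hb2 : (1/Real.sqrt 2:ℝ)^2 = 1/2 := by rw [div_pow, h22]; norm_num
  rw [tendsto_nhdsWithin_iff]
  constructor
  · have hc : Continuous (fun x : ℝ => Real.sqrt (1 - 2*x^2)) := by fun_prop
    have := (hc.tendsto (-(1/Real.sqrt 2))).mono_left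
      (nhdsWithin_le_nhds (s := Ioi (-(1/Real.sqrt 2))))
    convert this using 2
    rw [neg_pow]; rw [hb2]; norm_num
  · filter_upwards [Ioo_mem_nhdsGT_of_mem
      (Set.left_mem_Ico.mpr (by linarith : -(1/Real.sqrt 2) < (0:ℝ)))] with x hx
    have : 0 < 1 - 2*x^2 := by nlinarith [hx.1, hx.2]
    exact Real.sqrt_pos.mpr this

lemma tendsto_a : Tendsto Hanti (𝓝[>] (-(1/Real.sqrt 2)))
    (𝓝 ((1/π) * (-(π/2)) - (1/(π * Real.sqrt 2)) * (-(π/2)))) := by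
  have h2 : (0:ℝ) < Real.sqrt 2 := by positivity
  have hb : (0:ℝ) < 1/Real.sqrt 2 := by positivity
  have inner : Tendsto (fun x : ℝ => x / Real.sqrt (1 - 2*x^2))
      (𝓝[>] (-(1/Real.sqrt 2))) atBot := by
    simp only [div_eq_mul_inv]
    exact Filter.Tendsto.neg_mul_atTop (by linarith : -(1/Real.sqrt 2) < 0)
      (tendsto_id.mono_left nhdsWithin_le_nhds)
      sqrt_tendsto_bot.inv_tendsto_nhdsGT_zero
  have t1 : Tendsto (fun x : ℝ => Real.arctan (x / Real.sqrt (1 - 2*x^2)))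
      (𝓝[>] (-(1/Real.sqrt 2))) (𝓝 (-(π/2))) :=
    (Real.tendsto_arctan_atBot.mono_right nhdsWithin_le_nhds).comp inner
  have t2 : Tendsto (fun x : ℝ => Real.arcsin (Real.sqrt 2 * x))
      (𝓝[>] (-(1/Real.sqrt 2))) (𝓝 (-(π/2))) := by
    have hc : Continuous (fun x : ℝ => Real.arcsin (Real.sqrt 2 * x)) :=
      Real.continuous_arcsin.comp (continuous_const.mul continuous_id)
    have := (hc.tendsto (-(1/Real.sqrt 2))).mono_left
      (nhdsWithin_le_nhds (s := Ioi (-(1/Real.sqrt 2))))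
    convert this using 2
    rw [mul_neg, mul_one_div, div_self (ne_of_gt h2), Real.arcsin_neg, Real.arcsin_one]
  exact (t1.const_mul (1/π)).sub (t2.const_mul (1/(π * Real.sqrt 2)))

lemma hint_full : IntervalIntegrable
    (fun x : ℝ => x ^ 2 / (π * (1 - x ^ 2) * Real.sqrt (1 - 2 * x ^ 2)))
    volume (-(1/Real.sqrt 2)) (1/Real.sqrt 2) := by
  have hneg : IntervalIntegrable
      (fun x : ℝ => x ^ 2 / (π * (1 - x ^ 2) * Real.sqrt (1 - 2 * x ^ 2)))
      volume (-(1/Real.sqrt 2)) 0 := by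
    have h := (hint_pos.comp_sub_left 0).symm
    have heq : (fun x : ℝ => (0 - x) ^ 2 / (π * (1 - (0 - x) ^ 2) * Real.sqrt (1 - 2 * (0 - x) ^ 2)))
        = (fun x : ℝ => x ^ 2 / (π * (1 - x ^ 2) * Real.sqrt (1 - 2 * x ^ 2))) := by
      funext x; ring_nf
    rw [heq] at h
    simpa using h
  exact hneg.trans hint_pos

theorem hadamard_second_moment :
    ∫ x in (-(1 / Real.sqrt 2) : ℝ)..(1 / Real.sqrt 2),
      x ^ 2 / (π * (1 - x ^ 2) * Real.sqrt (1 - 2 * x ^ 2)) = (2 - Real.sqrt 2) / 2 := by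
  have h2 : (0:ℝ) < Real.sqrt 2 := by positivity
  have h22 : Real.sqrt 2 ^ 2 = 2 := Real.sq_sqrt (by norm_num)
  have hb : (0:ℝ) < 1/Real.sqrt 2 := by positivity
  have hπ := Real.pi_pos
  rw [intervalIntegral.integral_eq_sub_of_hasDerivAt_of_tendsto (f := Hanti)
      (by linarith : -(1/Real.sqrt 2) < 1/Real.sqrt 2)
      (fun x hx => hderiv_aux hx) hint_full tendsto_a tendsto_b]
  field_simp
  linear_combination h22
end
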